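/- Let g be a binary cubic over K with nonzero discriminant and with leading coefficient a ≠ 0, seminvariants P, U, and δ² = −3Δ. Then the equations (x+yδ)³ = (U+3aδ)/2 together with x²+3Δy² = P have a solution x,y ∈ K if and only if the cubic f(X) = 8X³ − 6PX − U has a root in K; moreover f(X) = a⁻¹g(2X+b, −3a), so this holds if and only if g has a linear factor over K. -/

import Mathlib

open Polynomial

/-- Discriminant of the binary cubic `aX³+bX²Y+cXY²+dY³`. -/
def cubicDisc {K : Type*} [CommRing K] (a b c d : K) : K :=
  b^2*c^2 - 4*a*c^3 - 4*b^3*d - 27*a^2*d^2 + 18*a*b*c*d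

/-- The defining polynomial `T² + 3Δ` of the resolvent algebra `L = K[δ]`. -/
noncomputable def resPoly {K : Type*} [CommRing K] (Δ : K) : Polynomial K :=
  X^2 + C (3*Δ)

lemma resPoly_degree {K : Type*} [Field K] (Δ : K) : (resPoly Δ).degree = 2 := by
  unfold resPoly
  simpa using Polynomial.degree_X_pow_add_C (n := 2) (by norm_num) (3*Δ)

lemma adjoinRoot_components {K : Type*} [Field K] (Δ : K) (c₀ c₁ d₀ d₁ : K)
    (h : algebraMap K (AdjoinRoot (resPoly Δ)) c₀
          + algebraMap K (AdjoinRoot (resPoly Δ)) c₁ * AdjoinRoot.root (resPoly Δ)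
        = algebraMap K (AdjoinRoot (resPoly Δ)) d₀
          + algebraMap K (AdjoinRoot (resPoly Δ)) d₁ * AdjoinRoot.root (resPoly Δ)) :
    c₀ = d₀ ∧ c₁ = d₁ := by
  have h' : AdjoinRoot.mk (resPoly Δ) (C c₀ + C c₁ * X)
      = AdjoinRoot.mk (resPoly Δ) (C d₀ + C d₁ * X) := by
    simpa [map_add, map_mul, AdjoinRoot.mk_C, AdjoinRoot.mk_X,
      AdjoinRoot.algebraMap_eq] using h
  have hdvd := AdjoinRoot.mk_eq_mk.mp h'
  have hz : (C c₀ + C c₁ * X) - (C d₀ + C d₁ * X) = 0 := by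
    refine Polynomial.eq_zero_of_dvd_of_degree_lt hdvd ?_
    rw [resPoly_degree]
    have : (C c₀ + C c₁ * X) - (C d₀ + C d₁ * X) = C (c₁ - d₁) * X + C (c₀ - d₀) := by
      rw [C_sub, C_sub]; ring
    rw [this]
    exact lt_of_le_of_lt (Polynomial.degree_linear_le) (by norm_num)
  constructor
  · have := congrArg (fun p => Polynomial.coeff p 0) hz
    simpa [sub_eq_zero] using this
  · have := congrArg (fun p => Polynomial.coeff p 1) hz
    simpa [sub_eq_zero] using this

theorem cardano_linear_factor_criterion {K : Type*} [Field K]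
    (h2 : (2:K) ≠ 0) (h3 : (3:K) ≠ 0)
    (a b c d Δ P U : K) (ha : a ≠ 0)
    (hΔdef : Δ = cubicDisc a b c d) (hΔ : Δ ≠ 0)
    (hP : P = b^2 - 3*a*c) (hU : U = 2*b^3 + 27*a^2*d - 9*a*b*c) :
    (∀ x : K, 8*x^3 - 6*P*x - U
        = a⁻¹ * (a*(2*x+b)^3 + b*(2*x+b)^2*(-3*a) + c*(2*x+b)*(-3*a)^2 + d*(-3*a)^3))
    ∧ ((∃ x y : K,
          2*(algebraMap K (AdjoinRoot (resPoly Δ)) x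
              + algebraMap K (AdjoinRoot (resPoly Δ)) y * AdjoinRoot.root (resPoly Δ))^3
            = algebraMap K (AdjoinRoot (resPoly Δ)) U
              + 3*algebraMap K (AdjoinRoot (resPoly Δ)) a * AdjoinRoot.root (resPoly Δ)
          ∧ x^2 + 3*Δ*y^2 = P)
        ↔ (∃ x : K, 8*x^3 - 6*P*x - U = 0))
    ∧ ((∃ x : K, 8*x^3 - 6*P*x - U = 0) ↔ (∃ e : K, a*e^3 + b*e^2 + c*e + d = 0)) := by
  set A := algebraMap K (AdjoinRoot (resPoly Δ)) with hA
  set r := AdjoinRoot.root (resPoly Δ) with hrdef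
  have hr : r^2 + A (3*Δ) = 0 := by
    have h : AdjoinRoot.mk (resPoly Δ) (X^2 + C (3*Δ)) = 0 := AdjoinRoot.mk_self
    rw [map_add, map_pow, AdjoinRoot.mk_X, AdjoinRoot.mk_C] at h
    exact h
  have expand : ∀ x y : K,
      2*(A x + A y * r)^3 = A (2*x^3 - 18*Δ*x*y^2) + A (6*x^2*y - 6*Δ*y^3) * r := by
    intro x y
    have hmap : A (3*Δ) = 3 * A Δ := by rw [map_mul, map_ofNat]
    have hr' : r^2 = -(3 * A Δ) := by
      rw [← hmap]; exact eq_neg_of_add_eq_zero_left hr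
    simp only [map_sub, map_mul, map_pow, map_ofNat]
    linear_combination (6 * A x * (A y)^2 + 2 * (A y)^3 * r) * hr'
  have key : 27*a^2*Δ = 4*P^3 - U^2 := by
    subst hΔdef hP hU; unfold cubicDisc; ring
  refine ⟨?_, ?_, ?_⟩
  · intro x
    field_simp
    subst hP hU
    ring
  · constructor
    · rintro ⟨x, y, heq, hPxy⟩
      rw [expand x y] at heq
      have hRHS : A U + 3 * A a * r = A U + A (3*a) * r := by
        rw [map_mul, map_ofNat]
      rw [hRHS] at heq
      obtain ⟨comp0, comp1⟩ := adjoinRoot_components Δ _ _ _ _ heq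
      exact ⟨x, by linear_combination 6*x*hPxy + comp0⟩
    · rintro ⟨x, hx⟩
      have hmaster : 4*(P - x^2)*(4*x^2 - P)^2 = 27*a^2*Δ := by
        linear_combination (-1) * key - (U + 8*x^3 - 6*P*x) * hx
      have h27 : (27:K) ≠ 0 := by
        have : (27:K) = 3^3 := by norm_num
        rw [this]; exact pow_ne_zero 3 h3
      have hq : (4*x^2 - P) ≠ 0 := by
        intro h0
        have : (27:K)*a^2*Δ = 0 := by rw [← hmaster, h0]; ring
        exact (mul_ne_zero (mul_ne_zero h27 (pow_ne_zero 2 ha)) hΔ) this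
      set y := 3*a/(2*(4*x^2 - P)) with hy
      have hPy : x^2 + 3*Δ*y^2 = P := by
        have : 3*Δ*(3*a/(2*(4*x^2-P)))^2 = P - x^2 := by
          rw [div_pow, mul_div_assoc', div_eq_iff (pow_ne_zero 2 (mul_ne_zero h2 hq))]
          linear_combination (-1) * hmaster
        rw [hy]
        linear_combination this
      have comp1 : 6*x^2*y - 6*Δ*y^3 = 3*a := by
        have h1 : 3*Δ*y^2 = P - x^2 := by linear_combination hPy
        have h2 : 2*y*(4*x^2-P) = 3*a := by rw [hy]; field_simp
        linear_combination (-2*y)*h1 + h2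
      have comp0 : 2*x^3 - 18*Δ*x*y^2 = U := by
        linear_combination (-6*x)*hPy + hx
      refine ⟨x, y, ?_, hPy⟩
      rw [expand x y, comp0, comp1]
      rw [map_mul, map_ofNat]
  · constructor
    · rintro ⟨x, hx⟩
      refine ⟨(-(2*x+b))/(3*a), ?_⟩
      field_simp
      linear_combination (-1) * hx + (-(6*x)) * hP + (-1) * hU
    · rintro ⟨e, he⟩
      refine ⟨(-3*a*e - b)/2, ?_⟩
      field_simp
      linear_combination (-(216*a^2)) * he + (72*a*e + 24*b) * hP + (-8) * hU
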